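/- Let $N\ge 2$, $p>0$, $q\in[0,2)$ with $p+q>1$, and set $\beta_1=(2-q)/(p+q-1)$. If $N(p+q-1)<p+1$ then $\beta_1+2-N>0$, so the constant $\Lambda_1^\dagger=((\beta_1+2-N)/\beta_1^{q-1})^{1/(p+q-1)}$ is well defined and positive, and the radial function $U(x)=\Lambda_1^\dagger |x|^{-\beta_1}$ satisfies $-\Delta U + U^p|\nabla U|^q = 0$ on $\mathbb{R}^N\setminus\{0\}$. -/

import Mathlib

/-- The (flat) Laplacian of a function on `ℝ^N`, as a sum of second partial derivatives. -/
noncomputable def lap {N : ℕ} (f : EuclideanSpace ℝ (Fin N) → ℝ)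
    (x : EuclideanSpace ℝ (Fin N)) : ℝ :=
  ∑ i : Fin N, fderiv ℝ (fun y => fderiv ℝ f y (EuclideanSpace.single i 1)) x
    (EuclideanSpace.single i 1)

open Real Filter

variable {E : Type*} [NormedAddCommGroup E] [InnerProductSpace ℝ E]

lemma hasFDerivAt_norm_rpow_ne {x : E} (hx : x ≠ 0) (c : ℝ) :
    HasFDerivAt (fun y : E => ‖y‖ ^ c) ((c * ‖x‖ ^ (c - 2)) • innerSL ℝ x) x := by
  have hx' : (0:ℝ) < ‖x‖ := norm_pos_iff.mpr hx
  have h1 : HasFDerivAt (fun y : E => (‖y‖ ^ 2 : ℝ)) (2 • innerSL ℝ x) x :=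
    (hasStrictFDerivAt_norm_sq x).hasFDerivAt
  have h2 := h1.rpow_const (p := c / 2) (Or.inl (by positivity))
  have heq : (fun y : E => (‖y‖ ^ 2 : ℝ) ^ (c / 2)) = fun y : E => ‖y‖ ^ c := by
    funext y
    rw [← Real.rpow_natCast ‖y‖ 2, ← Real.rpow_mul (norm_nonneg y)]
    norm_num
    ring_nf
  rw [heq] at h2
  convert h2 using 1
  have h3 : ((‖x‖:ℝ)^2) ^ (c/2 - 1) = ‖x‖ ^ (c - 2) := by
    rw [← Real.rpow_natCast ‖x‖ 2, ← Real.rpow_mul hx'.le]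
    norm_num
    ring_nf
  ext y
  simp [h3, smul_smul]
  ring

lemma hasFDerivAt_cmul {x : E} (hx : x ≠ 0) (Λ c : ℝ) :
    HasFDerivAt (fun y : E => Λ * ‖y‖ ^ c) ((Λ * c * ‖x‖ ^ (c - 2)) • innerSL ℝ x) x := by
  have h := (hasFDerivAt_norm_rpow_ne hx c).const_mul Λ
  refine h.congr_fderiv ?_
  ext y
  simp only [ContinuousLinearMap.smul_apply, smul_eq_mul]
  ring

lemma fderiv_cmul {x : E} (hx : x ≠ 0) (Λ c : ℝ) :
    fderiv ℝ (fun y : E => Λ * ‖y‖ ^ c) x = (Λ * c * ‖x‖ ^ (c - 2)) • innerSL ℝ x :=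
  (hasFDerivAt_cmul hx Λ c).fderiv

lemma norm_fderiv_cmul {x : E} (hx : x ≠ 0) (Λ c : ℝ) :
    ‖fderiv ℝ (fun y : E => Λ * ‖y‖ ^ c) x‖ = |Λ * c| * ‖x‖ ^ (c - 1) := by
  have hx' : (0:ℝ) < ‖x‖ := norm_pos_iff.mpr hx
  rw [fderiv_cmul hx Λ c, norm_smul, innerSL_apply_norm, Real.norm_eq_abs, abs_mul,
    abs_of_nonneg (Real.rpow_nonneg (norm_nonneg x) _), mul_assoc,
    ← Real.rpow_add_one hx'.ne']
  ring_nf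

lemma fderiv_cmul_single {N : ℕ} {x : EuclideanSpace ℝ (Fin N)} (hx : x ≠ 0) (Λ c : ℝ)
    (i : Fin N) :
    fderiv ℝ (fun y : EuclideanSpace ℝ (Fin N) => Λ * ‖y‖ ^ c) x (EuclideanSpace.single i 1)
      = Λ * c * ‖x‖ ^ (c - 2) * x i := by
  rw [fderiv_cmul hx Λ c]
  simp [EuclideanSpace.inner_single_right]

lemma second_deriv_single {N : ℕ} {x : EuclideanSpace ℝ (Fin N)} (hx : x ≠ 0) (Λ c : ℝ)
    (i : Fin N) :
    fderiv ℝ (fun y => fderiv ℝ (fun z : EuclideanSpace ℝ (Fin N) => Λ * ‖z‖ ^ c) y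
        (EuclideanSpace.single i 1)) x (EuclideanSpace.single i 1)
      = Λ * c * ((c - 2) * ‖x‖ ^ (c - 4) * (x i) ^ 2 + ‖x‖ ^ (c - 2)) := by
  have heq : (fun y => fderiv ℝ (fun z : EuclideanSpace ℝ (Fin N) => Λ * ‖z‖ ^ c) y
      (EuclideanSpace.single i 1)) =ᶠ[nhds x]
      (fun y => Λ * c * ‖y‖ ^ (c - 2) * y i) :=
    (eventually_ne_nhds hx).mono (fun y hy => fderiv_cmul_single hy Λ c i)
  rw [heq.fderiv_eq]
  have h1 := hasFDerivAt_cmul hx (Λ * c) (c - 2)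
  have h2 : HasFDerivAt (fun y : EuclideanSpace ℝ (Fin N) => y i)
      (EuclideanSpace.proj (𝕜 := ℝ) i) x := (EuclideanSpace.proj (𝕜 := ℝ) i).hasFDerivAt
  have h3 : HasFDerivAt (fun y : EuclideanSpace ℝ (Fin N) => Λ * c * ‖y‖ ^ (c - 2) * y i) _ x :=
    h1.mul h2
  rw [h3.fderiv]
  have h4 : c - 2 - 2 = c - 4 := by ring
  simp [h4, EuclideanSpace.inner_single_right]
  ring

lemma lap_cmul {N : ℕ} {x : EuclideanSpace ℝ (Fin N)} (hx : x ≠ 0) (Λ c : ℝ) :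
    lap (fun y => Λ * ‖y‖ ^ c) x = Λ * c * (c + N - 2) * ‖x‖ ^ (c - 2) := by
  have hx' : (0:ℝ) < ‖x‖ := norm_pos_iff.mpr hx
  have hsum : ∑ i : Fin N, (x i) ^ 2 = ‖x‖ ^ (2:ℕ) := by
    rw [EuclideanSpace.norm_eq, Real.sq_sqrt (by positivity)]
    simp [sq_abs]
  have hpow : ‖x‖ ^ (c - 4) * ‖x‖ ^ (2:ℕ) = ‖x‖ ^ (c - 2) := by
    rw [← Real.rpow_natCast ‖x‖ 2, ← Real.rpow_add hx']
    ring_nf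
  unfold lap
  simp only [second_deriv_single hx Λ c]
  rw [Finset.sum_congr rfl (fun i _ => by ring :
    ∀ i ∈ Finset.univ, Λ * c * ((c - 2) * ‖x‖ ^ (c - 4) * (x i) ^ 2 + ‖x‖ ^ (c - 2)) =
      (Λ * c * (c - 2) * ‖x‖ ^ (c - 4)) * (x i) ^ 2 + Λ * c * ‖x‖ ^ (c - 2))]
  rw [Finset.sum_add_distrib, ← Finset.mul_sum, hsum, Finset.sum_const, Finset.card_univ,
    Fintype.card_fin, nsmul_eq_mul]
  rw [mul_assoc (Λ * c * (c - 2)), hpow]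
  ring

/-- if `N(p+q-1) < p+1` then `β₁+2-N > 0`, the constant `Λ₁†` is positive,
and `U(x) = Λ₁† |x|^{-β₁}` solves `-ΔU + U^p |∇U|^q = 0` on `ℝ^N \ {0}`. -/
theorem stmt0 (N : ℕ) (hN : 2 ≤ N) (p q : ℝ) (hp : 0 < p) (hq0 : 0 ≤ q) (hq2 : q < 2)
    (hpq : 1 < p + q) (β Λ : ℝ)
    (hβ : β = (2 - q) / (p + q - 1))
    (hΛ : Λ = ((β + 2 - N) / β ^ (q - 1)) ^ (1 / (p + q - 1)))
    (hsub : (N : ℝ) * (p + q - 1) < p + 1) :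
    0 < β + 2 - N ∧ 0 < Λ ∧
      ∀ x : EuclideanSpace ℝ (Fin N), x ≠ 0 →
        -lap (fun y => Λ * ‖y‖ ^ (-β)) x
            + (Λ * ‖x‖ ^ (-β)) ^ p
              * ‖fderiv ℝ (fun y => Λ * ‖y‖ ^ (-β)) x‖ ^ q = 0 := by
  have hpq1 : (0:ℝ) < p + q - 1 := by linarith
  have hβ' : β * (p + q - 1) = 2 - q := by
    rw [hβ]; field_simp
  have hβpos : 0 < β := by
    rw [hβ]; exact div_pos (by linarith) hpq1
  have hβ2N : 0 < β + 2 - N := by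
    nlinarith [hβ', hpq1]
  have hbq : (0:ℝ) < β ^ (q - 1) := Real.rpow_pos_of_pos hβpos _
  have hA : (0:ℝ) < (β + 2 - N) / β ^ (q - 1) := by positivity
  have hΛpos : 0 < Λ := by
    rw [hΛ]; exact Real.rpow_pos_of_pos hA _
  refine ⟨hβ2N, hΛpos, ?_⟩
  intro x hx
  have hx' : (0:ℝ) < ‖x‖ := norm_pos_iff.mpr hx
  -- key constant identity
  have hΛkey : Λ ^ (p + q - 1) = (β + 2 - N) * β ^ (1 - q) := by
    rw [hΛ, ← Real.rpow_mul hA.le, one_div,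
      inv_mul_cancel₀ hpq1.ne', Real.rpow_one, div_eq_mul_inv, ← Real.rpow_neg hβpos.le]
    ring_nf
  have hconst : Λ ^ (p + q) * β ^ q = Λ * β * (β + 2 - N) := by
    have h1 : Λ ^ (p + q) = Λ ^ (p + q - 1) * Λ := by
      rw [← Real.rpow_add_one hΛpos.ne' (p + q - 1)]
      ring_nf
    rw [h1, hΛkey]
    have hb : β ^ (1 - q) * β ^ q = β := by
      rw [← Real.rpow_add hβpos]
      norm_num
    linear_combination (β + 2 - (N:ℝ)) * Λ * hb
  -- lap value
  rw [lap_cmul hx Λ (-β)]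
  -- gradient norm
  rw [norm_fderiv_cmul hx Λ (-β)]
  have habs : |Λ * -β| = Λ * β := by
    rw [abs_mul, abs_of_pos hΛpos, abs_neg, abs_of_pos hβpos]
  rw [habs]
  -- expand rpow of products
  have e1 : (Λ * ‖x‖ ^ (-β)) ^ p = Λ ^ p * ‖x‖ ^ (-β * p) := by
    rw [Real.mul_rpow hΛpos.le (Real.rpow_nonneg hx'.le _), ← Real.rpow_mul hx'.le]
  have e2 : (Λ * β * ‖x‖ ^ (-β - 1)) ^ q
      = Λ ^ q * β ^ q * ‖x‖ ^ ((-β - 1) * q) := by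
    rw [Real.mul_rpow (by positivity) (Real.rpow_nonneg hx'.le _),
      Real.mul_rpow hΛpos.le hβpos.le, ← Real.rpow_mul hx'.le]
  rw [e1, e2]
  have hexp : -β * p + (-β - 1) * q = -β - 2 := by linarith [hβ']
  have e3 : ‖x‖ ^ (-β * p) * ‖x‖ ^ ((-β - 1) * q) = ‖x‖ ^ (-β - 2) := by
    rw [← Real.rpow_add hx', hexp]
  have e4 : Λ ^ p * Λ ^ q = Λ ^ (p + q) := (Real.rpow_add hΛpos p q).symm
  calc -(Λ * -β * (-β + ↑N - 2) * ‖x‖ ^ (-β - 2))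
        + Λ ^ p * ‖x‖ ^ (-β * p) * (Λ ^ q * β ^ q * ‖x‖ ^ ((-β - 1) * q))
      = -(Λ * -β * (-β + ↑N - 2) * ‖x‖ ^ (-β - 2))
        + (Λ ^ p * Λ ^ q) * β ^ q * (‖x‖ ^ (-β * p) * ‖x‖ ^ ((-β - 1) * q)) := by ring
    _ = -(Λ * -β * (-β + ↑N - 2) * ‖x‖ ^ (-β - 2))
        + (Λ * β * (β + 2 - N)) * ‖x‖ ^ (-β - 2) := by rw [e3, e4, hconst]
    _ = 0 := by ring
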